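/- Let γ > 1, k₀ > 0 and p(ρ) := k₀ρ^γ. Let 0 < ρ_l < ρ_r, let v_l¹ ∈ ℝ, set v_r¹ := v_l¹ - √((ρ_r - ρ_l)·(p(ρ_r) - p(ρ_l))/(ρ_l·ρ_r)), s := (ρ_r v_r¹ - ρ_l v_l¹)/(ρ_r - ρ_l), and sound speeds c_l := √(k₀γ)·ρ_l^{(γ-1)/2}, c_r := √(k₀γ)·ρ_r^{(γ-1)/2}. Then the Lax shock (entropy) inequalities for the first characteristic family hold: v_r¹ - c_r < s < v_l¹ - c_l, and s < v_r¹. -/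

import Mathlib

lemma bern_lower (a b γ : ℝ) (ha : 0 < a) (hab : a < b) (hγ : 1 < γ) :
    γ * a ^ (γ - 1) * (b - a) < b ^ γ - a ^ γ := by
  have hb : 0 < b := ha.trans hab
  have hs : (0:ℝ) < (b - a) / a := div_pos (by linarith) ha
  have h := one_add_mul_self_lt_rpow_one_add (by linarith : (-1:ℝ) ≤ (b - a) / a)
    (ne_of_gt hs) hγ
  have h1 : (1 + (b - a) / a) = b / a := by field_simp; ring
  rw [h1, Real.div_rpow hb.le ha.le] at h
  have haγ : (0:ℝ) < a ^ γ := Real.rpow_pos_of_pos ha γ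
  have h2 : a ^ (γ - 1) = a ^ γ / a := Real.rpow_sub_one ha.ne' γ
  have e1 : a ^ γ * (1 + γ * ((b - a) / a)) = a ^ γ + γ * a ^ (γ - 1) * (b - a) := by
    rw [h2]; field_simp
  have e2 : a ^ γ * (b ^ γ / a ^ γ) = b ^ γ := by field_simp
  have h3 := mul_lt_mul_of_pos_left h haγ
  rw [e1, e2] at h3
  linarith

lemma bern_upper (a b γ : ℝ) (ha : 0 < a) (hab : a < b) (hγ : 1 < γ) :
    b ^ γ - a ^ γ < γ * b ^ (γ - 1) * (b - a) := by
  have hb : 0 < b := ha.trans hab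
  have hs : (a - b) / b < 0 := div_neg_of_neg_of_pos (by linarith) hb
  have hs1 : (-1:ℝ) ≤ (a - b) / b := by
    rw [le_div_iff₀ hb]; linarith
  have h := one_add_mul_self_lt_rpow_one_add hs1 (ne_of_lt hs) hγ
  have h1 : (1 + (a - b) / b) = a / b := by field_simp; ring
  rw [h1, Real.div_rpow ha.le hb.le] at h
  have hbγ : (0:ℝ) < b ^ γ := Real.rpow_pos_of_pos hb γ
  have h2 : b ^ (γ - 1) = b ^ γ / b := Real.rpow_sub_one hb.ne' γ
  have e1 : b ^ γ * (1 + γ * ((a - b) / b)) = b ^ γ - γ * b ^ (γ - 1) * (b - a) := by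
    rw [h2]; field_simp; ring
  have e2 : b ^ γ * (a ^ γ / b ^ γ) = a ^ γ := by field_simp
  have h3 := mul_lt_mul_of_pos_left h hbγ
  rw [e1, e2] at h3
  linarith

set_option maxHeartbeats 1000000 in
/-- **Lax shock (entropy) inequalities for a 1-shock** of the 2-D isentropic Euler system under
1-D symmetry: with `ρ_l < ρ_r`, `v_r¹ = v_l¹ - √((ρ_r-ρ_l)(p(ρ_r)-p(ρ_l))/(ρ_lρ_r))`,
`s = (ρ_r v_r¹ - ρ_l v_l¹)/(ρ_r - ρ_l)` and sound speeds `c_• = √(k₀γ) ρ_•^{(γ-1)/2}`, one has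
`v_r¹ - c_r < s < v_l¹ - c_l` and `s < v_r¹`. -/
theorem stmt_8 (γ k₀ : ℝ) (hγ : 1 < γ) (hk : 0 < k₀)
    (ρl ρr vl1 : ℝ) (hρl : 0 < ρl) (hlr : ρl < ρr)
    (vr1 : ℝ)
    (hvr1 : vr1 = vl1 -
      Real.sqrt ((ρr - ρl) * (k₀ * ρr ^ γ - k₀ * ρl ^ γ) / (ρl * ρr)))
    (s : ℝ) (hs : s = (ρr * vr1 - ρl * vl1) / (ρr - ρl))
    (cl cr : ℝ)
    (hcl : cl = Real.sqrt (k₀ * γ) * ρl ^ ((γ - 1) / 2))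
    (hcr : cr = Real.sqrt (k₀ * γ) * ρr ^ ((γ - 1) / 2)) :
    vr1 - cr < s ∧ s < vl1 - cl ∧ s < vr1 := by
  have hρr : 0 < ρr := hρl.trans hlr
  have hΔ : 0 < ρr - ρl := by linarith
  have hγ0 : 0 < γ := by linarith
  have hA : (0:ℝ) < ρl ^ (γ - 1) := Real.rpow_pos_of_pos hρl _
  have hB : (0:ℝ) < ρr ^ (γ - 1) := Real.rpow_pos_of_pos hρr _
  have key1 : γ * ρl ^ (γ - 1) * (ρr - ρl) < ρr ^ γ - ρl ^ γ := bern_lower ρl ρr γ hρl hlr hγ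
  have key2 : ρr ^ γ - ρl ^ γ < γ * ρr ^ (γ - 1) * (ρr - ρl) := bern_upper ρl ρr γ hρl hlr hγ
  have hΔp : (0:ℝ) < k₀ * ρr ^ γ - k₀ * ρl ^ γ := by
    nlinarith [mul_pos (mul_pos hγ0 hA) hΔ]
  have hX : 0 < (ρr - ρl) * (k₀ * ρr ^ γ - k₀ * ρl ^ γ) / (ρl * ρr) := by positivity
  set X := (ρr - ρl) * (k₀ * ρr ^ γ - k₀ * ρl ^ γ) / (ρl * ρr) with hXdef
  set h := Real.sqrt X with hhdef
  have hh : 0 < h := Real.sqrt_pos.mpr hX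
  have hcl2 : cl ^ 2 = k₀ * γ * ρl ^ (γ - 1) := by
    rw [hcl, mul_pow, Real.sq_sqrt (by positivity : (0:ℝ) ≤ k₀ * γ),
      ← Real.rpow_natCast (ρl ^ ((γ - 1) / 2)) 2, ← Real.rpow_mul hρl.le]
    norm_num
  have hcr2 : cr ^ 2 = k₀ * γ * ρr ^ (γ - 1) := by
    rw [hcr, mul_pow, Real.sq_sqrt (by positivity : (0:ℝ) ≤ k₀ * γ),
      ← Real.rpow_natCast (ρr ^ ((γ - 1) / 2)) 2, ← Real.rpow_mul hρr.le]
    norm_num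
  have hcl0 : 0 ≤ cl := by rw [hcl]; positivity
  have hcr0 : 0 < cr := by
    rw [hcr]
    have h1 : 0 < Real.sqrt (k₀ * γ) := Real.sqrt_pos.mpr (by positivity)
    have h2 : (0:ℝ) < ρr ^ ((γ - 1) / 2) := Real.rpow_pos_of_pos hρr _
    positivity
  have hs' : s = vl1 - ρr * h / (ρr - ρl) := by
    rw [hs, hvr1]; field_simp; ring
  refine ⟨?_, ?_, ?_⟩
  · -- vr1 - cr < s
    have hlt : h < cr * (ρr - ρl) / ρl := by
      rw [hhdef, Real.sqrt_lt' (by positivity), hXdef, div_pow, mul_pow, hcr2,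
        div_lt_div_iff₀ (by positivity) (by positivity)]
      have t1 := mul_lt_mul_of_pos_left key2 (show (0:ℝ) < k₀ * (ρr - ρl) * ρl ^ 2 by positivity)
      have t2 := mul_lt_mul_of_pos_left hlr
        (show (0:ℝ) < k₀ * γ * ρr ^ (γ - 1) * (ρr - ρl) ^ 2 * ρl by positivity)
      nlinarith [t1, t2]
    have h4 : h * ρl < cr * (ρr - ρl) := (lt_div_iff₀ hρl).mp hlt
    have h5 : ρl * h / (ρr - ρl) < cr := by
      rw [div_lt_iff₀ hΔ]; linarith
    have hexp : ρr * h / (ρr - ρl) - h = ρl * h / (ρr - ρl) := by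
      field_simp; ring
    rw [hvr1, hs']
    linarith [hexp, h5]
  · -- s < vl1 - cl
    have hlt : cl * (ρr - ρl) / ρr < h := by
      rw [hhdef, Real.lt_sqrt (by positivity), hXdef, div_pow, mul_pow, hcl2,
        div_lt_div_iff₀ (by positivity) (by positivity)]
      have t1 := mul_lt_mul_of_pos_left key1 (show (0:ℝ) < k₀ * (ρr - ρl) * ρr ^ 2 by positivity)
      have t2 := mul_lt_mul_of_pos_left hlr
        (show (0:ℝ) < k₀ * γ * ρl ^ (γ - 1) * (ρr - ρl) ^ 2 * ρr by positivity)
      nlinarith [t1, t2]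
    have h4 : cl * (ρr - ρl) < h * ρr := (div_lt_iff₀ hρr).mp hlt
    have h5 : cl < ρr * h / (ρr - ρl) := by
      rw [lt_div_iff₀ hΔ]; linarith
    rw [hs']
    linarith
  · -- s < vr1
    rw [hs', hvr1]
    have hp : 0 < h * ρl := mul_pos hh hρl
    have h4 : h * (ρr - ρl) < ρr * h := by ring_nf; ring_nf at hp; linarith
    have h5 : h < ρr * h / (ρr - ρl) := by
      rw [lt_div_iff₀ hΔ]; linarith
    linarith
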